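/- Let G be a finite group and let M, N be normal subgroups of G with N ≤ M. If N ≤ Z*(G) and the quotient group M/N is nilpotent, then M is nilpotent. -/

import Mathlib

/-- The hypercenter `Z*(G)` of a group: the union (supremum) of the upper central series. -/
def hypercenter (G : Type*) [Group G] : Subgroup G :=
  ⨆ n : ℕ, upperCentralSeries G n

/-- Let `G` be a finite group and `M`, `N` normal subgroups with `N ≤ M`.
If `N ≤ Z*(G)` and `M/N` is nilpotent, then `M` is nilpotent. -/
theorem isNilpotent_of_le_hypercenter_of_quotient_isNilpotent
    {G : Type*} [Group G] [Finite G] (M N : Subgroup G) [M.Normal] [N.Normal]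
    (hNM : N ≤ M) (hNZ : N ≤ hypercenter G)
    (hquot : Group.IsNilpotent (↥M ⧸ N.subgroupOf M)) :
    Group.IsNilpotent M := by
  classical
  -- Step 1: `N ≤ Z_n(G)` for some `n`.
  obtain ⟨n, hn⟩ : ∃ n, N ≤ upperCentralSeries G n := by
    have hdir : Directed (· ≤ ·) (upperCentralSeries G) :=
      (upperCentralSeries_mono G).directed_le
    have hx : ∀ x : N, ∃ k, (x : G) ∈ upperCentralSeries G k := fun x =>
      (Subgroup.mem_iSup_of_directed hdir).mp (hNZ x.2)
    choose f hf using hx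
    haveI := Fintype.ofFinite N
    refine ⟨Finset.univ.sup f, fun x hxN => ?_⟩
    exact upperCentralSeries_mono G (Finset.le_sup (Finset.mem_univ (⟨x, hxN⟩ : N)))
      (hf ⟨x, hxN⟩)
  obtain ⟨c, hc⟩ := hquot.nilpotent'
  set N' : Subgroup ↥M := N.subgroupOf M with hN'
  -- Step 2: build an ascending central series for `M`.
  rw [nilpotent_iff_finite_ascending_central_series]
  refine ⟨n + c + 1, fun k => if k ≤ n then (upperCentralSeries G k).subgroupOf M
    else Subgroup.comap (QuotientGroup.mk' N') (upperCentralSeries (↥M ⧸ N') (k - n)),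
    ⟨?_, ?_⟩, ?_⟩
  · simp [Subgroup.bot_subgroupOf, upperCentralSeries]
  · intro x k hx g
    simp only at hx ⊢
    by_cases hk1 : k + 1 ≤ n
    · have hk : k ≤ n := le_trans (Nat.le_succ k) hk1
      rw [if_pos hk1] at hx
      rw [if_pos hk]
      rw [Subgroup.mem_subgroupOf] at hx ⊢
      have := (mem_upperCentralSeries_succ_iff).mp hx (g : G)
      simpa [upperCentralSeries, commutatorElement_def] using this
    · rw [if_neg hk1] at hx
      by_cases hk : k ≤ n
      · -- then k = n, and k + 1 - n = 1
        have hkn : k = n := le_antisymm hk (Nat.le_of_lt_succ (lt_of_not_ge hk1))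
        subst hkn
        rw [if_pos le_rfl]
        have h1 : k + 1 - k = 1 := by omega
        rw [h1] at hx
        unfold upperCentralSeries at hx
        rw [upperCentralSeries_one] at hx
        have hx' : QuotientGroup.mk' N' x ∈ Subgroup.center (↥M ⧸ N') := hx
        have hcomm : QuotientGroup.mk' N' (x * g * x⁻¹ * g⁻¹) = 1 := by
          have hco := Subgroup.mem_center_iff.mp hx' (QuotientGroup.mk' N' g)
          simp only [map_mul, map_inv]
          rw [← hco]
          group
        have hker : x * g * x⁻¹ * g⁻¹ ∈ N' := by
          rwa [← QuotientGroup.ker_mk' N', MonoidHom.mem_ker]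
        exact Subgroup.mem_subgroupOf.mpr (hn (Subgroup.mem_subgroupOf.mp hker))
      · rw [if_neg (by omega : ¬ k ≤ n)]
        have hkj : k + 1 - n = (k - n) + 1 := by omega
        rw [hkj] at hx
        have hx' : QuotientGroup.mk' N' x ∈
            upperCentralSeries (↥M ⧸ N') ((k - n) + 1) := hx
        have := (mem_upperCentralSeries_succ_iff).mp hx' (QuotientGroup.mk' N' g)
        refine Subgroup.mem_comap.mpr ?_
        simpa [map_mul, map_inv, upperCentralSeries] using this
  · simp only
    rw [if_neg (by omega : ¬ n + c + 1 ≤ n)]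
    have h1 : n + c + 1 - n = c + 1 := by omega
    rw [h1, eq_top_iff]
    have : upperCentralSeries (↥M ⧸ N') c ≤ upperCentralSeries (↥M ⧸ N') (c + 1) :=
      upperCentralSeries_mono _ (Nat.le_succ c)
    unfold upperCentralSeries at this
    rw [hc] at this
    intro x _
    exact Subgroup.mem_comap.mpr (this trivial)
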